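/- Consider the linear advection flux f(x,u) = v(x)u with nodal velocities v_i, v_j ∈ ℝ^d. Let c ∈ ℝ^d, u_i, u_j ∈ ℝ, and let d > 0 satisfy d ≥ c · v_j and d ≥ −(c · v_i), where · is the Euclidean dot product. Then the bar state ū = (u_i + u_j)/2 − c · (v_j u_j − v_i u_i)/(2d) admits the decomposition 2d·ū = (d − c·v_j) u_j + (d + c·v_i) u_i with both coefficients d − c·v_j ≥ 0 and d + c·v_i ≥ 0; consequently, if u_i ≥ 0 and u_j ≥ 0 then ū ≥ 0. In particular this holds for the discrete upwinding coefficient d = max{c·v_j, 0, −c·v_i} whenever that maximum is positive, so the corresponding low-order scheme is positivity preserving. -/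

import Mathlib

/-- Discrete upwinding for linear advection: the bar state is a nonnegative combination
of the two nodal states and positivity is preserved. -/
theorem upwind_bar_state_positivity (d : ℕ) (c vi vj : EuclideanSpace ℝ (Fin d))
    (ui uj dij : ℝ) (hd : 0 < dij)
    (hj : (inner ℝ c vj : ℝ) ≤ dij) (hi : -(inner ℝ c vi : ℝ) ≤ dij) :
    2 * dij * ((ui + uj) / 2 - (inner ℝ c (uj • vj - ui • vi) : ℝ) / (2 * dij)) =
        (dij - (inner ℝ c vj : ℝ)) * uj + (dij + (inner ℝ c vi : ℝ)) * ui ∧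
      0 ≤ dij - (inner ℝ c vj : ℝ) ∧ 0 ≤ dij + (inner ℝ c vi : ℝ) ∧
      (0 ≤ ui → 0 ≤ uj →
        0 ≤ (ui + uj) / 2 - (inner ℝ c (uj • vj - ui • vi) : ℝ) / (2 * dij)) := by
  have hinner : (inner ℝ c (uj • vj - ui • vi) : ℝ)
      = uj * (inner ℝ c vj : ℝ) - ui * (inner ℝ c vi : ℝ) := by
    rw [inner_sub_right, inner_smul_right, inner_smul_right]
  have key : 2 * dij * ((ui + uj) / 2 - (inner ℝ c (uj • vj - ui • vi) : ℝ) / (2 * dij)) =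
      (dij - (inner ℝ c vj : ℝ)) * uj + (dij + (inner ℝ c vi : ℝ)) * ui := by
    rw [hinner]; field_simp; ring
  refine ⟨key, by linarith, by linarith, fun hui huj => ?_⟩
  have h1 : 0 ≤ (dij - (inner ℝ c vj : ℝ)) * uj + (dij + (inner ℝ c vi : ℝ)) * ui := by
    apply add_nonneg <;> apply mul_nonneg <;> linarith
  nlinarith [key]
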